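/- arXiv:1901.08800 — 2 statements merged into one kernel-verified Lean document; each statement's English description precedes it below -/
import Mathlib

section
/- Let u: [0,a] → [0,∞) be continuous and increasing with u(v) = 0 for some v ∈ [0,a), u(a) > 0, and suppose u is absolutely continuous with du(s) ≤ r(e^{Ks} u(s)) ds for a constant K ≥ 0 and an increasing function r: [0,∞) → (0,∞) on (0,∞). Then for every t ∈ (v, a], a - t ≥ e^{-Ka} ∫_{e^{Ka}u(t)}^{e^{Ka}u(a)} du/r(u). Consequently, if ∫_{0+} du/r(u) = ∞, then a - v = ∞, a contradiction; hence no such u with u(a) > 0 exists. -/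
open MeasureTheory Real Set intervalIntegral


private lemma inv_r_anti {r : ℝ → ℝ} (hr_mono : MonotoneOn r (Ici 0))
    (hr_pos : ∀ x : ℝ, 0 < x → 0 < r x) {y z : ℝ} (hy : 0 < y) :
    AntitoneOn (fun x => (r x)⁻¹) (Icc y z) := by
  intro x hx x' hx' hxx'
  have hx0 : 0 < x := lt_of_lt_of_le hy hx.1
  have hx'0 : 0 < x' := lt_of_lt_of_le hy hx'.1
  have h : r x ≤ r x' := hr_mono (mem_Ici.2 hx0.le) (mem_Ici.2 hx'0.le) hxx'
  exact inv_anti₀ (hr_pos x hx0) h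

private lemma step_int {r : ℝ → ℝ} (hr_mono : MonotoneOn r (Ici 0))
    (hr_pos : ∀ x : ℝ, 0 < x → 0 < r x) {y z : ℝ} (hy : 0 < y) (hyz : y ≤ z) :
    IntervalIntegrable (fun x => (r x)⁻¹) volume y z := by
  apply AntitoneOn.intervalIntegrable
  rw [uIcc_of_le hyz]
  exact inv_r_anti hr_mono hr_pos hy

private lemma step_bound {r : ℝ → ℝ} (hr_mono : MonotoneOn r (Ici 0))
    (hr_pos : ∀ x : ℝ, 0 < x → 0 < r x) {y z : ℝ} (hy : 0 < y) (hyz : y ≤ z) :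
    ∫ x in y..z, (r x)⁻¹ ≤ (z - y) * (r y)⁻¹ := by
  have h1 : ∫ x in y..z, (r x)⁻¹ ≤ ∫ _x in y..z, (r y)⁻¹ := by
    apply intervalIntegral.integral_mono_on hyz (step_int hr_mono hr_pos hy hyz)
      intervalIntegrable_const
    intro x hx
    have hx0 : 0 < x := lt_of_lt_of_le hy hx.1
    exact inv_anti₀ (hr_pos y hy) (hr_mono (mem_Ici.2 hy.le) (mem_Ici.2 hx0.le) hx.1)
  simpa [intervalIntegral.integral_const, smul_eq_mul] using h1

private lemma osgood_ind {r : ℝ → ℝ} (hr_mono : MonotoneOn r (Ici 0))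
    (hr_pos : ∀ x : ℝ, 0 < x → 0 < r x)
    {m : ℝ → ℝ} {s b c δ : ℝ} (hm_mono : MonotoneOn m (Icc s b))
    (hms : 0 < m s) (hc : 0 < c) (hδ : 0 < δ) (hsb : s ≤ b)
    (hstep : ∀ p q, s ≤ p → p ≤ q → q ≤ b → m q - m p ≤ c * (q - p) * r (m q)) :
    ∀ n : ℕ, ∀ p q, s ≤ p → p ≤ q → q ≤ b → q - p ≤ n * δ →
      ∫ x in (m p)..(m q), (r x)⁻¹ ≤
        c * (q - p) + c * δ * ((r (m q) - r (m p)) / r (m s)) := by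
  intro n
  induction n with
  | zero =>
    intro p q hsp hpq hqb hle
    have hqp : q = p := le_antisymm (by simpa using hle) hpq
    subst hqp
    simp
  | succ n ih =>
    intro p q hsp hpq hqb hle
    set z := max p (q - δ) with hz
    have hpz : p ≤ z := le_max_left _ _
    have hzq : z ≤ q := max_le hpq (by linarith)
    have hsz : s ≤ z := hsp.trans hpz
    have hzb : z ≤ b := hzq.trans hqb
    have hpb : p ≤ b := hpz.trans hzb
    have hnδ : (0:ℝ) ≤ n * δ := by positivity
    have hzp : z - p ≤ n * δ := by
      have h1 : q - δ ≤ p + n * δ := by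
        push_cast at hle; linarith
      have h2 : z ≤ p + n * δ := max_le (by linarith) h1
      linarith
    have hqz : q - z ≤ δ := by
      have := le_max_right p (q - δ); linarith
    -- monotone values of m
    have hpmem : p ∈ Icc s b := ⟨hsp, hpb⟩
    have hzmem : z ∈ Icc s b := ⟨hsz, hzb⟩
    have hqmem : q ∈ Icc s b := ⟨hsp.trans hpq, hqb⟩
    have hsmem : s ∈ Icc s b := ⟨le_rfl, hsb⟩
    have hmsp : m s ≤ m p := hm_mono hsmem hpmem hsp
    have hmpz : m p ≤ m z := hm_mono hpmem hzmem hpz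
    have hmzq : m z ≤ m q := hm_mono hzmem hqmem hzq
    have hmp : 0 < m p := hms.trans_le hmsp
    have hmz : 0 < m z := hmp.trans_le hmpz
    have hmq : 0 < m q := hmz.trans_le hmzq
    set R0 := r (m s) with hR0def
    set R1 := r (m p) with hR1def
    set R2 := r (m z) with hR2def
    set R3 := r (m q) with hR3def
    have hR0 : 0 < R0 := hr_pos _ hms
    have hR01 : R0 ≤ R1 := hr_mono (mem_Ici.2 hms.le) (mem_Ici.2 hmp.le) hmsp
    have hR12 : R1 ≤ R2 := hr_mono (mem_Ici.2 hmp.le) (mem_Ici.2 hmz.le) hmpz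
    have hR23 : R2 ≤ R3 := hr_mono (mem_Ici.2 hmz.le) (mem_Ici.2 hmq.le) hmzq
    have hR2 : 0 < R2 := hR0.trans_le (hR01.trans hR12)
    -- split the integral
    have hint1 := step_int hr_mono hr_pos hmp hmpz
    have hint2 := step_int hr_mono hr_pos hmz hmzq
    have hsplit : (∫ x in (m p)..(m z), (r x)⁻¹) + ∫ x in (m z)..(m q), (r x)⁻¹
        = ∫ x in (m p)..(m q), (r x)⁻¹ :=
      intervalIntegral.integral_add_adjacent_intervals hint1 hint2
    have hI1 := ih p z hsp hpz hzb hzp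
    have hI2a := step_bound hr_mono hr_pos hmz hmzq
    have hmqz := hstep z q hsz hzq hqb
    have hI2b : (m q - m z) * R2⁻¹ ≤ c * (q - z) * R3 * R2⁻¹ :=
      mul_le_mul_of_nonneg_right hmqz (inv_nonneg.2 hR2.le)
    have hkey : c * (q - z) * R3 * R2⁻¹ ≤ c * (q - z) + c * δ * ((R3 - R2) / R0) := by
      have hid : c * (q - z) * R3 * R2⁻¹ = c * (q - z) + c * (q - z) * ((R3 - R2) / R2) := by
        field_simp
        ring
      have h2 : (R3 - R2) / R2 ≤ (R3 - R2) / R0 := by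
        gcongr
        · linarith
      have h3 : c * (q - z) * ((R3 - R2) / R2) ≤ c * δ * ((R3 - R2) / R0) := by
        apply mul_le_mul _ h2 _ (by positivity)
        · nlinarith
        · exact div_nonneg (by linarith) hR2.le
      linarith
    have hring1 : c * (z - p) + c * (q - z) = c * (q - p) := by ring
    have hring2 : c * δ * ((R2 - R1) / R0) + c * δ * ((R3 - R2) / R0)
        = c * δ * ((R3 - R1) / R0) := by ring
    linarith

private lemma osgood_main {r : ℝ → ℝ} (hr_mono : MonotoneOn r (Ici 0))
    (hr_pos : ∀ x : ℝ, 0 < x → 0 < r x)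
    {m : ℝ → ℝ} {s b c : ℝ} (hm_mono : MonotoneOn m (Icc s b))
    (hms : 0 < m s) (hc : 0 < c) (hsb : s ≤ b)
    (hstep : ∀ p q, s ≤ p → p ≤ q → q ≤ b → m q - m p ≤ c * (q - p) * r (m q)) :
    ∫ x in (m s)..(m b), (r x)⁻¹ ≤ c * (b - s) := by
  apply le_of_forall_pos_le_add
  intro ε hε
  set k := (r (m b) - r (m s)) / r (m s) with hk
  have hmb : m s ≤ m b := hm_mono ⟨le_rfl, hsb⟩ ⟨hsb, le_rfl⟩ hsb
  have hR0 : 0 < r (m s) := hr_pos _ hms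
  have hkn : 0 ≤ k := by
    apply div_nonneg _ hR0.le
    have := hr_mono (mem_Ici.2 hms.le) (mem_Ici.2 (hms.trans_le hmb).le) hmb
    linarith
  set δ := ε / (c * (k + 1)) with hδdef
  have hδ : 0 < δ := by positivity
  obtain ⟨n, hn⟩ := exists_nat_ge ((b - s) / δ)
  have hbs : b - s ≤ n * δ := by
    rw [div_le_iff₀ hδ] at hn
    linarith
  have hmain := osgood_ind hr_mono hr_pos hm_mono hms hc hδ hsb hstep n s b le_rfl hsb le_rfl hbs
  have hcδk : c * δ * k ≤ ε := by
    have hck1 : (0:ℝ) < c * (k + 1) := by positivity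
    have hcancel : δ * (c * (k + 1)) = ε := div_mul_cancel₀ ε (ne_of_gt hck1)
    nlinarith
  calc ∫ x in (m s)..(m b), (r x)⁻¹ ≤ c * (b - s) + c * δ * k := hmain
    _ ≤ c * (b - s) + ε := by linarith

/-- Change-of-variables estimate in the uniqueness proof: if `u` is continuous
increasing on `[0,a]` with `u v = 0`, `u a > 0`, and
`u t - u s ≤ ∫_s^t r(e^{Kx} u x) dx`, then for every `t ∈ (v, a]`,
`a - t ≥ e^{-Ka} ∫_{e^{Ka}u(t)}^{e^{Ka}u(a)} du / r(u)`; consequently, if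
`∫_{0+} du / r(u) = ∞`, we reach a contradiction: no such `u` with `u a > 0`
exists. -/
theorem osgood_change_of_variables
    (K : ℝ) (hK : 0 ≤ K) (a v : ℝ) (hv : 0 ≤ v) (hva : v < a)
    (r : ℝ → ℝ) (hr_mono : MonotoneOn r (Ici 0))
    (hr_pos : ∀ x : ℝ, 0 < x → 0 < r x)
    (u : ℝ → ℝ) (hu_cont : ContinuousOn u (Icc 0 a))
    (hu_mono : MonotoneOn u (Icc 0 a))
    (hu_nonneg : ∀ t ∈ Icc 0 a, 0 ≤ u t)
    (huv : u v = 0) (hua : 0 < u a)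
    (hu_ode : ∀ s t : ℝ, v ≤ s → s ≤ t → t ≤ a →
      u t - u s ≤ ∫ x in s..t, r (Real.exp (K * x) * u x)) :
    (∀ t ∈ Ioc v a,
        Real.exp (-(K * a)) *
            ∫ x in (Real.exp (K * a) * u t)..(Real.exp (K * a) * u a), (r x)⁻¹
          ≤ a - t) ∧
      ((∀ ε : ℝ, 0 < ε →
          ¬ IntegrableOn (fun x => (r x)⁻¹) (Ioo 0 ε) volume) → False) := by
  set c := Real.exp (K * a) with hcdef
  have hc : 0 < c := Real.exp_pos _
  have hva' : v ≤ a := hva.le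
  have hvmem : v ∈ Icc (0:ℝ) a := ⟨hv, hva'⟩
  have hamem : a ∈ Icc (0:ℝ) a := ⟨hv.trans hva', le_rfl⟩
  -- key estimate for points where u is positive
  have key : ∀ s, v < s → s ≤ a → 0 < u s →
      ∫ x in (c * u s)..(c * u a), (r x)⁻¹ ≤ c * (a - s) := by
    intro s hvs hsa hus
    have hs0 : 0 ≤ s := hv.trans hvs.le
    have hmem : ∀ x, s ≤ x → x ≤ a → x ∈ Icc (0:ℝ) a := fun x h1 h2 => ⟨hs0.trans h1, h2⟩
    have hm_mono : MonotoneOn (fun x => c * u x) (Icc s a) := by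
      intro x hx y hy hxy
      exact mul_le_mul_of_nonneg_left (hu_mono (hmem x hx.1 hx.2) (hmem y hy.1 hy.2) hxy) hc.le
    have hstep : ∀ p q, s ≤ p → p ≤ q → q ≤ a →
        (fun x => c * u x) q - (fun x => c * u x) p
          ≤ c * (q - p) * r ((fun x => c * u x) q) := by
      intro p q hsp hpq hqa
      simp only
      have hpmem := hmem p hsp (hpq.trans hqa)
      have hqmem := hmem q (hsp.trans hpq) hqa
      have hode := hu_ode p q (hvs.le.trans hsp) hpq hqa
      have huq0 : 0 ≤ u q := hu_nonneg q hqmem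
      have hmono2 : MonotoneOn (fun x => r (Real.exp (K * x) * u x)) (Icc p q) := by
        intro x hx y hy hxy
        have hxm := hmem x (hsp.trans hx.1) (hx.2.trans hqa)
        have hym := hmem y (hsp.trans hy.1) (hy.2.trans hqa)
        have hux : 0 ≤ u x := hu_nonneg x hxm
        have h1 : Real.exp (K * x) * u x ≤ Real.exp (K * y) * u y :=
          mul_le_mul (Real.exp_le_exp.2 (mul_le_mul_of_nonneg_left hxy hK))
            (hu_mono hxm hym hxy) hux (Real.exp_pos _).le
        have huy : 0 ≤ u y := hu_nonneg y hym
        exact hr_mono (mem_Ici.2 (mul_nonneg (Real.exp_pos _).le hux))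
          (mem_Ici.2 (mul_nonneg (Real.exp_pos _).le huy)) h1
      have hint : IntervalIntegrable (fun x => r (Real.exp (K * x) * u x)) volume p q := by
        apply MonotoneOn.intervalIntegrable
        rwa [uIcc_of_le hpq]
      have hptwise : ∀ x ∈ Icc p q, r (Real.exp (K * x) * u x) ≤ r (c * u q) := by
        intro x hx
        have hxm := hmem x (hsp.trans hx.1) (hx.2.trans hqa)
        have hux : 0 ≤ u x := hu_nonneg x hxm
        have h1 : Real.exp (K * x) * u x ≤ c * u q := by
          rw [hcdef]
          exact mul_le_mul (Real.exp_le_exp.2 (mul_le_mul_of_nonneg_left (hx.2.trans hqa) hK))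
            (hu_mono hxm hqmem hx.2) hux (Real.exp_pos _).le
        exact hr_mono (mem_Ici.2 (mul_nonneg (Real.exp_pos _).le hux))
          (mem_Ici.2 (mul_nonneg hc.le huq0)) h1
      have hle : ∫ x in p..q, r (Real.exp (K * x) * u x) ≤ (q - p) * r (c * u q) := by
        have h := intervalIntegral.integral_mono_on hpq hint intervalIntegrable_const hptwise
        simpa [intervalIntegral.integral_const, smul_eq_mul] using h
      calc c * u q - c * u p = c * (u q - u p) := by ring
        _ ≤ c * ((q - p) * r (c * u q)) :=
            mul_le_mul_of_nonneg_left (hode.trans hle) hc.le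
        _ = c * (q - p) * r (c * u q) := by ring
    have hms : 0 < c * u s := mul_pos hc hus
    exact osgood_main hr_mono hr_pos hm_mono hms hc hsa hstep
  have hexp : Real.exp (-(K * a)) = c⁻¹ := by rw [Real.exp_neg]
  constructor
  · -- Part 1
    intro t ht
    have ht0a : t ∈ Icc 0 a := ⟨hv.trans ht.1.le, ht.2⟩
    rcases lt_or_eq_of_le (hu_nonneg t ht0a) with hut | hut
    · have h := key t ht.1 ht.2 hut
      rw [hexp]
      calc c⁻¹ * ∫ x in (c * u t)..(c * u a), (r x)⁻¹
          ≤ c⁻¹ * (c * (a - t)) := mul_le_mul_of_nonneg_left h (inv_nonneg.2 hc.le)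
        _ = a - t := by field_simp
    · -- u t = 0
      set Y := c * u a with hY
      have hY0 : 0 < Y := mul_pos hc hua
      have hct : c * u t = 0 := by rw [← hut, mul_zero]
      rw [hexp, hct]
      by_cases hInt : IntegrableOn (fun x => (r x)⁻¹) (Ioc 0 Y) volume
      · have main : ∫ x in Ioc (0:ℝ) Y, (r x)⁻¹ ≤ c * (a - t) := by
          set E : ℕ → Set ℝ := fun n => Ioc (min Y (1 / (n + 1))) Y with hE
          have hmin : ∀ n : ℕ, 0 < min Y (1 / ((n:ℝ) + 1)) := by
            intro n
            apply lt_min hY0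
            positivity
          have hEmono : Monotone E := by
            intro i j hij
            apply Ioc_subset_Ioc_left
            apply min_le_min le_rfl
            apply one_div_le_one_div_of_le (by positivity)
            have : (i:ℝ) ≤ j := Nat.cast_le.2 hij
            linarith
          have hEU : ⋃ n, E n = Ioc 0 Y := by
            apply Subset.antisymm
            · apply iUnion_subset
              intro n
              exact Ioc_subset_Ioc_left (hmin n).le
            · intro x hx
              obtain ⟨n, hn⟩ := exists_nat_one_div_lt hx.1
              exact mem_iUnion.2 ⟨n, ⟨lt_of_le_of_lt (min_le_right _ _) hn, hx.2⟩⟩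
          have htend := tendsto_setIntegral_of_monotone (fun n => measurableSet_Ioc) hEmono
            (hEU ▸ hInt)
          rw [hEU] at htend
          apply le_of_tendsto htend
          apply Filter.Eventually.of_forall
          intro n
          obtain ⟨t', ht'mem, ht'⟩ : ∃ t' ∈ Icc t a, u t' = min Y (1 / ((n:ℝ) + 1)) / c := by
            have hIVT := intermediate_value_Icc ht.2
              (hu_cont.mono (Icc_subset_Icc ht0a.1 le_rfl))
            apply hIVT
            constructor
            · rw [← hut]; exact (div_pos (hmin n) hc).le
            · rw [div_le_iff₀ hc]
              calc min Y (1 / ((n:ℝ) + 1)) ≤ Y := min_le_left _ _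
                _ = u a * c := by rw [hY]; ring
          have hut' : 0 < u t' := by
            rw [ht']
            exact div_pos (hmin n) hc
          have ht'v : v < t' := lt_of_lt_of_le ht.1 ht'mem.1
          have hkey := key t' ht'v ht'mem.2 hut'
          have hcu : c * u t' = min Y (1 / ((n:ℝ) + 1)) := by
            rw [ht', mul_div_cancel₀ _ (ne_of_gt hc)]
          have hcut'Y : c * u t' ≤ Y := by
            rw [hcu]; exact min_le_left _ _
          have heq : ∫ x in E n, (r x)⁻¹ = ∫ x in (c * u t')..(c * u a), (r x)⁻¹ := by
            rw [intervalIntegral.integral_of_le hcut'Y, hcu]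
          rw [heq]
          calc ∫ x in (c * u t')..(c * u a), (r x)⁻¹ ≤ c * (a - t') := hkey
            _ ≤ c * (a - t) := by
                apply mul_le_mul_of_nonneg_left _ hc.le
                linarith [ht'mem.1]
        rw [intervalIntegral.integral_of_le hY0.le]
        calc c⁻¹ * ∫ x in Ioc (0:ℝ) Y, (r x)⁻¹
            ≤ c⁻¹ * (c * (a - t)) := mul_le_mul_of_nonneg_left main (inv_nonneg.2 hc.le)
          _ = a - t := by field_simp
      · have hzero : ∫ x in (0:ℝ)..Y, (r x)⁻¹ = 0 := by
          rw [intervalIntegral.integral_of_le hY0.le]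
          exact integral_undef hInt
        rw [hzero, mul_zero]
        linarith [ht.2]
  · -- Part 2
    intro hdiv
    set Y := c * u a with hY
    have hY0 : 0 < Y := mul_pos hc hua
    apply hdiv Y hY0
    have hIoc : IntegrableOn (fun x => (r x)⁻¹) (Ioc 0 Y) volume := by
      have hmin : ∀ n : ℕ, 0 < min Y (1 / ((n:ℝ) + 1)) := by
        intro n
        apply lt_min hY0
        positivity
      have hminY : ∀ n : ℕ, min Y (1 / ((n:ℝ) + 1)) ≤ Y := fun n => min_le_left _ _
      -- IVT points
      have hpts : ∀ n : ℕ, ∃ t' ∈ Icc v a, u t' = min Y (1 / ((n:ℝ) + 1)) / c := by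
        intro n
        have hIVT := intermediate_value_Icc hva'
          (hu_cont.mono (Icc_subset_Icc hv le_rfl))
        apply hIVT
        constructor
        · rw [huv]; exact (div_pos (hmin n) hc).le
        · rw [div_le_iff₀ hc]
          calc min Y (1 / ((n:ℝ) + 1)) ≤ Y := min_le_left _ _
            _ = u a * c := by rw [hY]; ring
      apply MeasureTheory.integrableOn_Ioc_of_intervalIntegral_norm_bounded
        (l := (Filter.atTop : Filter ℕ)) (a := fun n => min Y (1 / ((n:ℝ) + 1)))
        (b := fun _ => Y) (I := c * (a - v))
      · intro n
        exact (step_int hr_mono hr_pos (hmin n) (hminY n)).1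
      · have h1 : Filter.Tendsto (fun n : ℕ => 1 / ((n:ℝ) + 1)) Filter.atTop (nhds 0) :=
          tendsto_one_div_add_atTop_nhds_zero_nat
        have h2 := Filter.Tendsto.min (tendsto_const_nhds (x := Y)) h1
        rwa [min_eq_right hY0.le] at h2
      · exact tendsto_const_nhds
      · apply Filter.Eventually.of_forall
        intro n
        obtain ⟨t', ht'mem, ht'⟩ := hpts n
        have hut' : 0 < u t' := by
          rw [ht']
          exact div_pos (hmin n) hc
        have ht'v : v < t' := by
          rcases eq_or_lt_of_le ht'mem.1 with h | h
          · exfalso; rw [← h, huv] at hut'; exact lt_irrefl 0 hut'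
          · exact h
        have hkey := key t' ht'v ht'mem.2 hut'
        have hcu : c * u t' = min Y (1 / ((n:ℝ) + 1)) := by
          rw [ht', mul_div_cancel₀ _ (ne_of_gt hc)]
        have hnorm : ∫ x in Ioc (min Y (1 / ((n:ℝ) + 1))) Y, ‖(r x)⁻¹‖
            = ∫ x in Ioc (min Y (1 / ((n:ℝ) + 1))) Y, (r x)⁻¹ := by
          apply setIntegral_congr_fun measurableSet_Ioc
          intro x hx
          have hx0 : 0 < x := (hmin n).trans hx.1
          show ‖(r x)⁻¹‖ = (r x)⁻¹
          rw [Real.norm_eq_abs, abs_of_nonneg (inv_nonneg.2 (hr_pos x hx0).le)]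
        rw [hnorm]
        have heq : ∫ x in Ioc (min Y (1 / ((n:ℝ) + 1))) Y, (r x)⁻¹
            = ∫ x in (c * u t')..(c * u a), (r x)⁻¹ := by
          rw [intervalIntegral.integral_of_le (by rw [hcu]; exact hminY n), hcu]
        rw [heq]
        calc ∫ x in (c * u t')..(c * u a), (r x)⁻¹ ≤ c * (a - t') := hkey
          _ ≤ c * (a - v) := by
              apply mul_le_mul_of_nonneg_left _ hc.le
              linarith [ht'mem.1]
    exact hIoc.mono_set Ioo_subset_Ioc_self
end

section
/- Let (β, q) and (β′, q′) be pairs of nonnegative rate functions with β(x) ≤ β′(x) and q(x,z) ≤ q′(x,z) for all x ≥ 0, z > 0, and assume additionally that x ↦ β(x) is increasing and for each z, either x ↦ q(x,z) or x ↦ q′(x,z) is increasing. If Y_{k-1}(s) ≤ Y′_{k-1}(s) pathwise for all s, then the Picard iterates satisfy Y_k(t) ≤ Y′_k(t) pathwise for all t, where Y_k(t) = X_t + ∫_0^t h_{t-s} β(Y_{k-1}(s-)) ds + ∫_0^t ∫_0^{β(Y_{k-1}(s-))} ∫_W w(t-s) N_0(ds,du,dw) + ∫_0^t ∫_0^∞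 ∫_0^{q(Y_{k-1}(s-),z)} ∫_W w(t-s) N_1(ds,dz,du,dw), and similarly for Y′_k with (β′,q′). -/
open MeasureTheory Real Set

/-- One Picard iterate of the immigration equation (1.13):
`Y_k(t) = X_t + ∫_0^t h_{t-s} β(Y_{k-1}(s)) ds
 + ∫_0^t ∫_0^{β(Y_{k-1}(s))} ∫_W w(t-s) N₀(ds,du,dw)
 + ∫_0^t ∫_0^∞ ∫_0^{q(Y_{k-1}(s),z)} ∫_W w(t-s) N₁(ds,dz,du,dw)`,
with paths valued in `[0,∞]`. -/
noncomputable def picardStep (X : ℝ → ENNReal) (h : ℝ → ENNReal)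
    (N₀ : Measure (ℝ × ℝ × (ℝ → ENNReal)))
    (N₁ : Measure (ℝ × ℝ × ℝ × (ℝ → ENNReal)))
    (β : ENNReal → ENNReal) (q : ENNReal → ℝ → ENNReal)
    (Y : ℝ → ENNReal) (t : ℝ) : ENNReal :=
  X t + (∫⁻ s in Ioc (0:ℝ) t, h (t - s) * β (Y s)) +
    (∫⁻ p in {p : ℝ × ℝ × (ℝ → ENNReal) |
        p.1 ∈ Ioc (0:ℝ) t ∧ 0 < p.2.1 ∧ ENNReal.ofReal p.2.1 ≤ β (Y p.1)},
      p.2.2 (t - p.1) ∂N₀) +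
    ∫⁻ p in {p : ℝ × ℝ × ℝ × (ℝ → ENNReal) |
        p.1 ∈ Ioc (0:ℝ) t ∧ 0 < p.2.1 ∧ 0 < p.2.2.1 ∧
          ENNReal.ofReal p.2.2.1 ≤ q (Y p.1) p.2.1},
      p.2.2.2 (t - p.1) ∂N₁

/-- Induction step of the comparison theorem (Theorem 5.5): if `β ≤ β'`,
`q ≤ q'`, `β` is increasing, for each `z` either `q(·,z)` or `q'(·,z)` is
increasing, and the previous iterates satisfy `Y_{k-1} ≤ Y'_{k-1}` pathwise,
then the next iterates satisfy `Y_k ≤ Y'_k` pathwise. -/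
theorem picard_comparison_step
    (X : ℝ → ENNReal) (h : ℝ → ENNReal)
    (N₀ : Measure (ℝ × ℝ × (ℝ → ENNReal)))
    (N₁ : Measure (ℝ × ℝ × ℝ × (ℝ → ENNReal)))
    (β β' : ENNReal → ENNReal) (q q' : ENNReal → ℝ → ENNReal)
    (hβ_mono : Monotone β)
    (hq_mono : ∀ z : ℝ, Monotone (fun x => q x z) ∨ Monotone (fun x => q' x z))
    (hββ' : ∀ x, β x ≤ β' x) (hqq' : ∀ x z, q x z ≤ q' x z)
    (Yprev Yprev' : ℝ → ENNReal) (hprev : ∀ s : ℝ, Yprev s ≤ Yprev' s) :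
    ∀ t : ℝ, picardStep X h N₀ N₁ β q Yprev t ≤
      picardStep X h N₀ N₁ β' q' Yprev' t := by
  intro t
  have hβle : ∀ s, β (Yprev s) ≤ β' (Yprev' s) := fun s =>
    le_trans (hβ_mono (hprev s)) (hββ' _)
  have hqle : ∀ s z, q (Yprev s) z ≤ q' (Yprev' s) z := by
    intro s z
    rcases hq_mono z with hm | hm
    · exact le_trans (hm (hprev s)) (hqq' _ _)
    · exact le_trans (hqq' _ _) (hm (hprev s))
  unfold picardStep
  gcongr
  · exact hβle _
  · exact hβle _
  · exact hqle _ _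
end
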